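/- Let G = (B,E) be a graph on n vertices and k ≤ n. In the adding-candidates destructive-control construction (qualified candidates {c,w} ∪ X ∪ Y ∪ Z with ‖X‖ = n−1, ‖Y‖ = n−2, ‖Z‖ = n−2; spoiler candidates B; voters: for each i one voter approving N_c[b_i] then X then c; n voters approving Y then c then w; one voter approving Z then w then c), G has a dominating set of size at most k if and only if c can be prevented from being the unique fallback voting winner by adding at most k spoiler candidates from B. -/

import Mathlib

/- Fallback voting framework.  A ballot is the linearly ordered list of a voter's
approved candidates (most preferred first); an election is a list of ballots. -/
namespace FV

variable {α : Type*} [DecidableEq α]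

/-- The level-`i` score of candidate `c`: the number of voters who approve `c`
and rank `c` among their top `i` approved candidates. -/
def levelScore (V : List (List α)) (i : ℕ) (c : α) : ℕ :=
  (V.filter (fun b => decide (c ∈ b.take i))).length

/-- The overall approval score of candidate `c`. -/
def score (V : List (List α)) (c : α) : ℕ :=
  (V.filter (fun b => decide (c ∈ b))).length

/-- `c` has a strict majority of approvals at level `i`. -/
def MajAt (V : List (List α)) (i : ℕ) (c : α) : Prop :=
  2 * levelScore V i c > V.length

/-- `c` is a fallback voting winner of the election with candidate set `Cs`
and voter list `V`:  either at the first level (up to `‖Cs‖`) at which some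
candidate attains a strict majority, `c` has a strict majority and maximal
level score among strict-majority candidates; or no candidate ever attains a
strict majority and `c` has maximal overall approval score. -/
def FVWinner (Cs : Finset α) (V : List (List α)) (c : α) : Prop :=
  c ∈ Cs ∧
    ((∃ i, 1 ≤ i ∧ i ≤ Cs.card ∧ MajAt V i c ∧
        (∀ j, j < i → ∀ d ∈ Cs, ¬ MajAt V j d) ∧
        (∀ d ∈ Cs, MajAt V i d → levelScore V i d ≤ levelScore V i c)) ∨
     ((∀ i, i ≤ Cs.card → ∀ d ∈ Cs, ¬ MajAt V i d) ∧
        ∀ d ∈ Cs, score V d ≤ score V c))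

/-- `c` is the unique fallback voting winner. -/
def UniqueFVWinner (Cs : Finset α) (V : List (List α)) (c : α) : Prop :=
  FVWinner Cs V c ∧ ∀ d, FVWinner Cs V d → d = c

end FV

/- The adding-candidates construction for destructive control.  Qualified
candidates: `{c,w} ∪ X ∪ Y ∪ Z` with `‖X‖ = n-1`, `‖Y‖ = n-2`, `‖Z‖ = n-2`;
spoiler candidates are the vertices of `G`.  Voters: for each `i` one voter
approving `N_c[bᵢ]` (restricted to the added spoilers) then `X` then `c`;
`n` voters approving `Y` then `c` then `w`; one voter approving `Z` then `w`
then `c`. -/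
namespace ACD

abbrev Cand (n : ℕ) :=
  Sum (Fin n) (Sum (Fin (n - 1)) (Sum (Fin (n - 2)) (Sum (Fin (n - 2)) Bool)))

def bC {n : ℕ} (b : Fin n) : Cand n := Sum.inl b
def xC {n : ℕ} (j : Fin (n - 1)) : Cand n := Sum.inr (Sum.inl j)
def yC {n : ℕ} (j : Fin (n - 2)) : Cand n := Sum.inr (Sum.inr (Sum.inl j))
def zC {n : ℕ} (j : Fin (n - 2)) : Cand n := Sum.inr (Sum.inr (Sum.inr (Sum.inl j)))
def cC (n : ℕ) : Cand n := Sum.inr (Sum.inr (Sum.inr (Sum.inr false)))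
def wC (n : ℕ) : Cand n := Sum.inr (Sum.inr (Sum.inr (Sum.inr true)))

def Xlist (n : ℕ) : List (Cand n) := (List.finRange (n - 1)).map xC
def Ylist (n : ℕ) : List (Cand n) := (List.finRange (n - 2)).map yC
def Zlist (n : ℕ) : List (Cand n) := (List.finRange (n - 2)).map zC

/-- The first-group ballot of voter `i` with spoiler set `B'` added. -/
def ballot1 {n : ℕ} (A : Fin n → List (Fin n)) (B' : Finset (Fin n)) (i : Fin n) :
    List (Cand n) :=
  (((A i).filter (fun b => decide (b ∈ B'))).map bC) ++ Xlist n ++ [cC n]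

/-- The `2n+1` voters of the election with spoiler set `B'` added. -/
def election {n : ℕ} (A : Fin n → List (Fin n)) (B' : Finset (Fin n)) :
    List (List (Cand n)) :=
  (List.finRange n).map (ballot1 A B') ++
    List.replicate n (Ylist n ++ [cC n, wC n]) ++
    [Zlist n ++ [wC n, cC n]]

/-- The candidate set when exactly the spoilers in `B'` have been added. -/
def candSet {n : ℕ} (B' : Finset (Fin n)) : Finset (Cand n) :=
  Finset.univ \ ((Finset.univ \ B').image bC)

end ACD

namespace ACDProof
open ACD FV List

instance {n : ℕ} : BEq (Cand n) := instBEqOfDecidableEq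
instance {n : ℕ} : LawfulBEq (Cand n) := instLawfulBEq

lemma mem_take_middle {α : Type*} (a : α) (L rest : List α) (j : ℕ) (ha : a ∉ L) :
    a ∈ (L ++ a :: rest).take j ↔ L.length < j := by
  constructor
  · intro h
    by_contra hj
    push_neg at hj
    rw [List.take_append] at h
    rcases List.mem_append.1 h with h | h
    · exact ha (List.mem_of_mem_take h)
    · have h0 : j - L.length = 0 := Nat.sub_eq_zero_of_le hj
      simp [h0] at h
  · intro hj
    rw [List.take_append]
    refine List.mem_append.2 (Or.inr ?_)
    obtain ⟨m, hm⟩ : ∃ m, j - L.length = m + 1 := ⟨j - L.length - 1, by omega⟩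
    simp [hm]

variable {n : ℕ} (A : Fin n → List (Fin n)) (B' : Finset (Fin n))

lemma levelScore_election (j : ℕ) (d : Cand n) :
    levelScore (election A B') j d =
      (List.finRange n).countP (fun i => decide (d ∈ (ballot1 A B' i).take j))
      + (if d ∈ (Ylist n ++ [cC n, wC n]).take j then n else 0)
      + (if d ∈ (Zlist n ++ [wC n, cC n]).take j then 1 else 0) := by
  simp only [levelScore, election, List.filter_append, List.length_append,
    List.filter_map, List.length_map, ← List.countP_eq_length_filter,
    List.filter_replicate, Function.comp_def]
  by_cases h1 : d ∈ (Ylist n ++ [cC n, wC n]).take j <;>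
    by_cases h2 : d ∈ (Zlist n ++ [wC n, cC n]).take j <;>
      simp [h1, h2]

lemma length_Xlist : (Xlist n).length = n - 1 := by simp [Xlist]
lemma length_Ylist : (Ylist n).length = n - 2 := by simp [Ylist]
lemma length_Zlist : (Zlist n).length = n - 2 := by simp [Zlist]

lemma memb1_c (j : ℕ) (i : Fin n) :
    cC n ∈ (ballot1 A B' i).take j ↔
      ((A i).filter (fun b => decide (b ∈ B'))).length + (n-1) < j := by
  have h := mem_take_middle (cC n)
    ((((A i).filter (fun b => decide (b ∈ B'))).map bC) ++ Xlist n) [] j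
    (by simp [Xlist, bC, xC, cC])
  simpa [ballot1, length_Xlist] using h

lemma memb1_w (j : ℕ) (i : Fin n) : wC n ∉ (ballot1 A B' i).take j := by
  intro h
  have := List.mem_of_mem_take h
  simp [ballot1, Xlist, bC, xC, cC, wC] at this

lemma memb1_y (j : ℕ) (i : Fin n) (y : Fin (n-2)) : yC y ∉ (ballot1 A B' i).take j := by
  intro h
  have := List.mem_of_mem_take h
  simp [ballot1, Xlist, bC, xC, cC, yC] at this

lemma memb1_z (j : ℕ) (i : Fin n) (z : Fin (n-2)) : zC z ∉ (ballot1 A B' i).take j := by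
  intro h
  have := List.mem_of_mem_take h
  simp [ballot1, Xlist, bC, xC, cC, zC] at this

lemma memY_c (j : ℕ) : cC n ∈ (Ylist n ++ [cC n, wC n]).take j ↔ n - 2 < j := by
  have h := mem_take_middle (cC n) (Ylist n) [wC n] j (by simp [Ylist, yC, cC])
  simpa [length_Ylist] using h

lemma memY_w (j : ℕ) : wC n ∈ (Ylist n ++ [cC n, wC n]).take j ↔ (n - 2) + 1 < j := by
  have e : Ylist n ++ [cC n, wC n] = (Ylist n ++ [cC n]) ++ wC n :: [] := by simp
  rw [e, mem_take_middle (wC n) _ _ j (by simp [Ylist, yC, cC, wC])]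
  simp [length_Ylist]

lemma memZ_w (j : ℕ) : wC n ∈ (Zlist n ++ [wC n, cC n]).take j ↔ n - 2 < j := by
  have h := mem_take_middle (wC n) (Zlist n) [cC n] j (by simp [Zlist, zC, wC])
  simpa [length_Zlist] using h

lemma memZ_c (j : ℕ) : cC n ∈ (Zlist n ++ [wC n, cC n]).take j ↔ (n - 2) + 1 < j := by
  have e : Zlist n ++ [wC n, cC n] = (Zlist n ++ [wC n]) ++ cC n :: [] := by simp
  rw [e, mem_take_middle (cC n) _ _ j (by simp [Zlist, zC, cC, wC])]
  simp [length_Zlist]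

lemma levelScore_c (j : ℕ) :
    levelScore (election A B') j (cC n) =
      (List.finRange n).countP
        (fun i => decide (((A i).filter (fun b => decide (b ∈ B'))).length + (n-1) < j))
      + (if n - 2 < j then n else 0) + (if (n - 2) + 1 < j then 1 else 0) := by
  simp only [levelScore_election, memb1_c, memY_c, memZ_c]

lemma levelScore_w (j : ℕ) :
    levelScore (election A B') j (wC n) =
      (if (n - 2) + 1 < j then n else 0) + (if n - 2 < j then 1 else 0) := by
  simp only [levelScore_election, memY_w, memZ_w]
  rw [List.countP_eq_zero.2 (fun i _ => by simpa using memb1_w A B' j i)]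
  omega

lemma election_length : (election A B').length = 2 * n + 1 := by
  simp [election]; omega

lemma ls_le_n_b (j : ℕ) (b : Fin n) : levelScore (election A B') j (bC b) ≤ n := by
  rw [levelScore_election]
  have h1 : bC b ∉ (Ylist n ++ [cC n, wC n]).take j := fun h => by
    have := List.mem_of_mem_take h; simp [Ylist, yC, bC, cC, wC] at this
  have h2 : bC b ∉ (Zlist n ++ [wC n, cC n]).take j := fun h => by
    have := List.mem_of_mem_take h; simp [Zlist, zC, bC, cC, wC] at this
  have h3 := List.countP_le_length
    (p := fun i => decide (bC b ∈ (ballot1 A B' i).take j)) (l := List.finRange n)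
  simp only [h1, h2, if_neg, if_false, Nat.add_zero]
  simpa using h3

lemma ls_le_n_x (j : ℕ) (x : Fin (n-1)) : levelScore (election A B') j (xC x) ≤ n := by
  rw [levelScore_election]
  have h1 : xC x ∉ (Ylist n ++ [cC n, wC n]).take j := fun h => by
    have := List.mem_of_mem_take h; simp [Ylist, yC, xC, cC, wC] at this
  have h2 : xC x ∉ (Zlist n ++ [wC n, cC n]).take j := fun h => by
    have := List.mem_of_mem_take h; simp [Zlist, zC, xC, cC, wC] at this
  have h3 := List.countP_le_length
    (p := fun i => decide (xC x ∈ (ballot1 A B' i).take j)) (l := List.finRange n)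
  simp only [h1, h2, if_neg, if_false, Nat.add_zero]
  simpa using h3

lemma ls_le_n_y (j : ℕ) (y : Fin (n-2)) : levelScore (election A B') j (yC y) ≤ n := by
  rw [levelScore_election]
  have h2 : yC y ∉ (Zlist n ++ [wC n, cC n]).take j := fun h => by
    have := List.mem_of_mem_take h; simp [Zlist, zC, yC, cC, wC] at this
  rw [List.countP_eq_zero.2 (fun i _ => by simpa using memb1_y A B' j i y)]
  simp only [h2, if_neg, if_false, Nat.add_zero, Nat.zero_add]
  split <;> omega

lemma ls_le_n_z (hn : 3 ≤ n) (j : ℕ) (z : Fin (n-2)) :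
    levelScore (election A B') j (zC z) ≤ n := by
  rw [levelScore_election]
  have h1 : zC z ∉ (Ylist n ++ [cC n, wC n]).take j := fun h => by
    have := List.mem_of_mem_take h; simp [Ylist, yC, zC, cC, wC] at this
  rw [List.countP_eq_zero.2 (fun i _ => by simpa using memb1_z A B' j i z)]
  simp only [h1, if_neg, if_false, Nat.zero_add, Nat.add_zero]
  split <;> omega

lemma not_maj_of_le_n (hle : levelScore (election A B') j d ≤ n) :
    ¬ MajAt (election A B') j d := by
  simp only [MajAt, election_length, gt_iff_lt, not_lt]
  omega

lemma no_maj_lt_n (hn : 3 ≤ n) (j : ℕ) (hj : j < n) (d : Cand n) :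
    ¬ MajAt (election A B') j d := by
  apply not_maj_of_le_n
  obtain b | x | y | z | (_|_) := d
  · exact ls_le_n_b A B' j b
  · exact ls_le_n_x A B' j x
  · exact ls_le_n_y A B' j y
  · exact ls_le_n_z A B' hn j z
  · -- cC
    rw [show (Sum.inr (Sum.inr (Sum.inr (Sum.inr false))) : Cand n) = cC n from rfl,
      levelScore_c]
    rw [List.countP_eq_zero.2 (fun i _ => by
      simp only [decide_eq_true_eq]; omega)]
    have : ¬ ((n-2) + 1 < j) := by omega
    simp only [this, if_neg, if_false, Nat.zero_add, Nat.add_zero]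
    split <;> omega
  · -- wC
    rw [show (Sum.inr (Sum.inr (Sum.inr (Sum.inr true))) : Cand n) = wC n from rfl,
      levelScore_w]
    have h1 : ¬ ((n-2) + 1 < j) := by omega
    simp only [h1, if_neg, if_false, Nat.zero_add]
    split <;> omega

lemma levelScore_c_n (hn : 3 ≤ n) :
    levelScore (election A B') n (cC n) =
      (List.finRange n).countP
        (fun i => decide ((A i).filter (fun b => decide (b ∈ B')) = [])) + n + 1 := by
  rw [levelScore_c]
  have h1 : n - 2 < n := by omega
  have h2 : (n-2) + 1 < n := by omega
  rw [if_pos h1, if_pos h2]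
  congr 2
  apply List.countP_congr
  intro i _
  simp only [decide_eq_true_eq, List.length_eq_zero_iff]
  constructor
  · intro h; have : (((A i).filter (fun b => decide (b ∈ B'))).length) = 0 := by omega
    exact List.length_eq_zero_iff.1 this
  · intro h; rw [h]; simp; omega

lemma levelScore_w_n (hn : 3 ≤ n) : levelScore (election A B') n (wC n) = n + 1 := by
  rw [levelScore_w]
  have h1 : (n-2) + 1 < n := by omega
  have h2 : n - 2 < n := by omega
  rw [if_pos h1, if_pos h2]

lemma maj_c_n (hn : 3 ≤ n) : MajAt (election A B') n (cC n) := by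
  simp only [MajAt, election_length, gt_iff_lt, levelScore_c_n A B' hn]
  omega

lemma maj_w_n (hn : 3 ≤ n) : MajAt (election A B') n (wC n) := by
  simp only [MajAt, election_length, gt_iff_lt, levelScore_w_n A B' hn]
  omega

lemma cC_mem : cC n ∈ candSet B' := by simp [candSet, bC, cC]
lemma wC_mem : wC n ∈ candSet B' := by simp [candSet, bC, wC]

lemma n_le_card (hn : 3 ≤ n) : n ≤ (candSet B').card := by
  unfold candSet
  rw [Finset.card_sdiff_of_subset (Finset.subset_univ _)]
  have h1 : ((Finset.univ \ B').image bC).card ≤ n :=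
    le_trans Finset.card_image_le (le_trans (Finset.card_le_univ _) (by simp))
  have h2 : Fintype.card (Cand n) = n + ((n-1) + ((n-2) + ((n-2) + 2))) := by
    simp [Cand]
  rw [Finset.card_univ, h2]
  omega

/-- number of first-group voters whose spoiler part is empty -/
def dcount (A : Fin n → List (Fin n)) (B' : Finset (Fin n)) : ℕ :=
  (List.finRange n).countP
    (fun i => decide ((A i).filter (fun b => decide (b ∈ B')) = []))

lemma maj_cases (hn : 3 ≤ n) (j : ℕ) (d : Cand n)
    (h : MajAt (election A B') j d) : d = cC n ∨ d = wC n := by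
  obtain b | x | y | z | (_|_) := d
  · exact absurd h (not_maj_of_le_n A B' (ls_le_n_b A B' j b))
  · exact absurd h (not_maj_of_le_n A B' (ls_le_n_x A B' j x))
  · exact absurd h (not_maj_of_le_n A B' (ls_le_n_y A B' j y))
  · exact absurd h (not_maj_of_le_n A B' (ls_le_n_z A B' hn j z))
  · exact Or.inl rfl
  · exact Or.inr rfl

lemma winner_c (hn : 3 ≤ n) : FVWinner (candSet B') (election A B') (cC n) := by
  refine ⟨cC_mem B', Or.inl ⟨n, by omega, n_le_card B' hn, maj_c_n A B' hn,
    fun j hj d _ => no_maj_lt_n A B' hn j hj d, ?_⟩⟩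
  intro d _ hmaj
  rcases maj_cases A B' hn n d hmaj with rfl | rfl
  · exact le_refl _
  · rw [levelScore_w_n A B' hn, levelScore_c_n A B' hn]; omega

lemma unique_of_pos (hn : 3 ≤ n) (hm : 0 < dcount A B') :
    ∀ d, FVWinner (candSet B') (election A B') d → d = cC n := by
  rintro d ⟨hdmem, hcase | hcase⟩
  · obtain ⟨i, h1, hcard, hmaj, hnone, hmax⟩ := hcase
    have hin : i = n := by
      rcases lt_trichotomy i n with h | h | h
      · exact absurd hmaj (no_maj_lt_n A B' hn i h d)
      · exact h
      · exact absurd (maj_c_n A B' hn) (hnone n h (cC n) (cC_mem B'))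
    rw [hin] at hmaj hmax
    rcases maj_cases A B' hn n d hmaj with rfl | rfl
    · rfl
    · exfalso
      have := hmax (cC n) (cC_mem B') (maj_c_n A B' hn)
      rw [levelScore_w_n A B' hn, levelScore_c_n A B' hn] at this
      have hm' : 0 < (List.finRange n).countP
        (fun i => decide ((A i).filter (fun b => decide (b ∈ B')) = [])) := hm
      omega
  · exact absurd (maj_c_n A B' hn)
      (hcase.1 n (n_le_card B' hn) (cC n) (cC_mem B'))

lemma winner_w (hn : 3 ≤ n) (hm : dcount A B' = 0) :
    FVWinner (candSet B') (election A B') (wC n) := by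
  refine ⟨wC_mem B', Or.inl ⟨n, by omega, n_le_card B' hn, maj_w_n A B' hn,
    fun j hj d _ => no_maj_lt_n A B' hn j hj d, ?_⟩⟩
  intro d _ hmaj
  rcases maj_cases A B' hn n d hmaj with rfl | rfl
  · rw [levelScore_w_n A B' hn, levelScore_c_n A B' hn]
    have hm' : (List.finRange n).countP
      (fun i => decide ((A i).filter (fun b => decide (b ∈ B')) = [])) = 0 := hm
    omega
  · exact le_refl _

lemma key (hn : 3 ≤ n) :
    UniqueFVWinner (candSet B') (election A B') (cC n) ↔ 0 < dcount A B' := by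
  constructor
  · intro h
    by_contra hm
    have hm0 : dcount A B' = 0 := by omega
    have := h.2 (wC n) (winner_w A B' hn hm0)
    simp [wC, cC] at this
  · intro hm
    exact ⟨winner_c A B' hn, unique_of_pos A B' hn hm⟩

lemma dom_iff (G : SimpleGraph (Fin n)) [DecidableRel G.Adj]
    (hAmem : ∀ i b, b ∈ A i ↔ (b = i ∨ G.Adj i b)) :
    (∀ u, ∃ v ∈ B', u = v ∨ G.Adj v u) ↔ dcount A B' = 0 := by
  rw [dcount, List.countP_eq_zero]
  constructor
  · intro h i _
    obtain ⟨v, hvB, hv⟩ := h i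
    simp only [decide_eq_true_eq]
    intro hfil
    have hvA : v ∈ A i := (hAmem i v).2 (by
      rcases hv with h' | h'
      · exact Or.inl h'.symm
      · exact Or.inr (G.adj_symm h'))
    have : v ∈ (A i).filter (fun b => decide (b ∈ B')) :=
      List.mem_filter.2 ⟨hvA, by simpa using hvB⟩
    rw [hfil] at this
    exact absurd this List.not_mem_nil
  · intro h u
    have := h u (List.mem_finRange u)
    simp only [decide_eq_true_eq] at this
    have hne : ∃ v ∈ A u, v ∈ B' := by
      by_contra hno
      push_neg at hno
      exact this (List.filter_eq_nil_iff.2 (fun a ha => by simpa using hno a ha))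
    obtain ⟨v, hvA, hvB⟩ := hne
    refine ⟨v, hvB, ?_⟩
    rcases (hAmem u v).1 hvA with h' | h'
    · exact Or.inl h'.symm
    · exact Or.inr (G.adj_symm h')

end ACDProof

/-- in the adding-candidates destructive construction, `G` has
a dominating set of size at most `k` iff `c` can be prevented from being the
unique fallback voting winner by adding at most `k` spoiler candidates. -/
theorem fv_destructive_adding_candidates {n k : ℕ} (hn : 3 ≤ n)
    (hk : 0 < k) (hkn : k ≤ n)
    (G : SimpleGraph (Fin n)) [DecidableRel G.Adj]
    (A : Fin n → List (Fin n))
    (hAnd : ∀ i, (A i).Nodup)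
    (hAmem : ∀ i b, b ∈ A i ↔ (b = i ∨ G.Adj i b)) :
    (∃ B' : Finset (Fin n), B'.card ≤ k ∧ ∀ u, ∃ v ∈ B', u = v ∨ G.Adj v u) ↔
    (∃ B' : Finset (Fin n), B'.card ≤ k ∧
      ¬ FV.UniqueFVWinner (ACD.candSet B') (ACD.election A B') (ACD.cC n)) := by
  constructor
  · rintro ⟨B', hcard, hdom⟩
    refine ⟨B', hcard, ?_⟩
    rw [ACDProof.key A B' hn]
    have h0 : ACDProof.dcount A B' = 0 := (ACDProof.dom_iff A B' G hAmem).1 hdom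
    omega
  · rintro ⟨B', hcard, hnu⟩
    refine ⟨B', hcard, ?_⟩
    rw [ACDProof.dom_iff A B' G hAmem]
    rw [ACDProof.key A B' hn] at hnu
    omega
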